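/- Assume additionally that γ_1 > γ_2 > … > γ_K > 0 (strictly decreasing). Let 0 ≤ η₁ < η₂, and for each j ∈ {1,2} let S_j be a minimizer of ℓ(·;η_j) over subsets of {1,…,K} of minimal cardinality among all such minimizers. Then S₁ ⊆ S₂. -/
import Mathlib

open Finset

noncomputable def Gam (γ : ℕ → ℝ) (k : ℕ) : ℝ := ∑ i ∈ Finset.Icc 1 k, γ i

noncomputable def gfun (lam : ℝ) (k : ℕ) : ℝ := (if 1 < k then 1 else 0) + lam * (k : ℝ)

noncomputable def Psi (γ : ℕ → ℝ) (lam η : ℝ) (k : ℕ) : ℝ := gfun lam k - η * Gam γ k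

noncomputable def kappa (γ : ℕ → ℝ) (lam : ℝ) (K : ℕ) (η : ℝ) : ℕ :=
  sInf {k : ℕ | k ≤ K ∧ ∀ j ≤ K, Psi γ lam η k ≤ Psi γ lam η j}

noncomputable def score (γ : ℕ → ℝ) (lam : ℝ) (K : ℕ) (i : ℕ) : ℝ :=
  sInf {η : ℝ | 0 ≤ η ∧ i ≤ kappa γ lam K η}

noncomputable def ell (γ : ℕ → ℝ) (lam η : ℝ) (S : Finset ℕ) : ℝ :=
  (if 1 < S.card then 1 else 0) + lam * (S.card : ℝ) - η * ∑ i ∈ S, γ i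

noncomputable def etaSlope (γ : ℕ → ℝ) (lam : ℝ) (v : ℕ → ℕ) (i : ℕ) : ℝ :=
  (gfun lam (v i) - gfun lam (v (i - 1))) / (Gam γ (v i) - Gam γ (v (i - 1)))

lemma topm_sum_lt (K : ℕ) (γ : ℕ → ℝ)
    (hmono : ∀ i j : ℕ, 1 ≤ i → i ≤ j → j ≤ K → γ j ≤ γ i)
    (hstrict : ∀ i : ℕ, 1 ≤ i → i < K → γ (i + 1) < γ i)
    (S : Finset ℕ) (hS : S ⊆ Finset.Icc 1 K)
    (hne : S ≠ Finset.Icc 1 S.card) :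
    ∑ i ∈ S, γ i < ∑ i ∈ Finset.Icc 1 S.card, γ i := by
  set m := S.card with hm
  set A := Finset.Icc 1 m with hA
  have hcardA : A.card = m := by simp [hA]
  have hSA : (S \ A).Nonempty := by
    rw [Finset.sdiff_nonempty]
    intro hsub
    exact hne (Finset.eq_of_subset_of_card_le hsub (by rw [hcardA]))
  have hcards : (S \ A).card = (A \ S).card := by
    rw [Finset.card_sdiff_comm (by rw [hcardA])]
  obtain ⟨j₀, hj₀⟩ := hSA
  have hj₀S := (Finset.mem_sdiff.mp hj₀).1
  have hj₀A := (Finset.mem_sdiff.mp hj₀).2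
  have hj₀K := Finset.mem_Icc.mp (hS hj₀S)
  have hmj : m < j₀ := by
    by_contra h
    exact hj₀A (Finset.mem_Icc.mpr ⟨hj₀K.1, not_lt.mp h⟩)
  have hm1 : 1 ≤ m := by
    have : (A \ S).Nonempty := Finset.card_pos.mp (hcards ▸ Finset.card_pos.mpr ⟨j₀, hj₀⟩)
    obtain ⟨i₀, hi₀⟩ := this
    have := (Finset.mem_Icc.mp (Finset.mem_sdiff.mp hi₀).1)
    exact le_trans this.1 this.2
  have hmK : m < K := lt_of_lt_of_le hmj hj₀K.2
  have key1 : ∀ j ∈ S \ A, γ j ≤ γ (m + 1) := by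
    intro j hj
    have hjS := (Finset.mem_sdiff.mp hj).1
    have hjA := (Finset.mem_sdiff.mp hj).2
    have hjK := Finset.mem_Icc.mp (hS hjS)
    have : m < j := by
      by_contra h
      exact hjA (Finset.mem_Icc.mpr ⟨hjK.1, not_lt.mp h⟩)
    exact hmono (m+1) j (by omega) (by omega) hjK.2
  have key2 : ∀ i ∈ A \ S, γ m ≤ γ i := by
    intro i hi
    have := Finset.mem_Icc.mp (Finset.mem_sdiff.mp hi).1
    exact hmono i m this.1 this.2 (le_of_lt hmK)
  have hsd : γ (m + 1) < γ m := hstrict m hm1 hmK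
  set n := (S \ A).card with hn
  have hnpos : 0 < n := Finset.card_pos.mpr ⟨j₀, hj₀⟩
  have h1 : ∑ i ∈ S \ A, γ i ≤ n • γ (m + 1) := Finset.sum_le_card_nsmul _ _ _ key1
  have h2 : n • γ m ≤ ∑ i ∈ A \ S, γ i := by
    rw [hcards]; exact Finset.card_nsmul_le_sum _ _ _ key2
  have h3 : (n:ℝ) • γ (m+1) < (n:ℝ) • γ m := by
    apply smul_lt_smul_of_pos_left hsd
    exact_mod_cast hnpos
  have hdiff : ∑ i ∈ S \ A, γ i < ∑ i ∈ A \ S, γ i := by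
    calc ∑ i ∈ S \ A, γ i ≤ n • γ (m + 1) := h1
    _ = (n:ℝ) • γ (m+1) := by simp
    _ < (n:ℝ) • γ m := h3
    _ = n • γ m := by simp
    _ ≤ ∑ i ∈ A \ S, γ i := h2
  have e1 : ∑ i ∈ S ∩ A, γ i + ∑ i ∈ S \ A, γ i = ∑ i ∈ S, γ i :=
    Finset.sum_inter_add_sum_sdiff S A γ
  have e2 : ∑ i ∈ A ∩ S, γ i + ∑ i ∈ A \ S, γ i = ∑ i ∈ A, γ i :=
    Finset.sum_inter_add_sum_sdiff A S γ
  rw [Finset.inter_comm] at e2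
  linarith

/-- any minimizer at positive η is a prefix -/
lemma min_is_prefix (K : ℕ) (γ : ℕ → ℝ) (lam η : ℝ) (hη : 0 < η)
    (hmono : ∀ i j : ℕ, 1 ≤ i → i ≤ j → j ≤ K → γ j ≤ γ i)
    (hstrict : ∀ i : ℕ, 1 ≤ i → i < K → γ (i + 1) < γ i)
    (S : Finset ℕ) (hS : S ⊆ Finset.Icc 1 K)
    (hmin : ∀ T ⊆ Finset.Icc 1 K, ell γ lam η S ≤ ell γ lam η T) :
    S = Finset.Icc 1 S.card := by
  by_contra hne
  have hmK : S.card ≤ K := by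
    have := Finset.card_le_card hS
    simpa using this
  have hAsub : Finset.Icc 1 S.card ⊆ Finset.Icc 1 K :=
    Finset.Icc_subset_Icc le_rfl hmK
  have hsum := topm_sum_lt K γ hmono hstrict S hS hne
  have hcardA : (Finset.Icc 1 S.card).card = S.card := by simp
  have : ell γ lam η (Finset.Icc 1 S.card) < ell γ lam η S := by
    unfold ell
    rw [hcardA]
    have := mul_lt_mul_of_pos_left hsum hη
    linarith
  exact absurd (hmin _ hAsub) (not_le.mpr this)

lemma ell_prefix (γ : ℕ → ℝ) (lam η : ℝ) (k : ℕ) :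
    ell γ lam η (Finset.Icc 1 k) = gfun lam k - η * Gam γ k := by
  simp [ell, gfun, Gam]

/-- Nested sets: with strictly decreasing γ, minimal-cardinality minimizers at η₁ < η₂
are nested: S₁ ⊆ S₂. -/
theorem stmt2 (K : ℕ) (hK : 1 ≤ K) (γ : ℕ → ℝ) (lam : ℝ) (hlam : 0 ≤ lam)
    (hmono : ∀ i j : ℕ, 1 ≤ i → i ≤ j → j ≤ K → γ j ≤ γ i)
    (hstrict : ∀ i : ℕ, 1 ≤ i → i < K → γ (i + 1) < γ i)
    (hposK : 0 < γ K)
    (hsum : ∑ i ∈ Finset.Icc 1 K, γ i = 1)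
    (η₁ η₂ : ℝ) (hη₁ : 0 ≤ η₁) (hη₁₂ : η₁ < η₂)
    (S₁ S₂ : Finset ℕ) (hS₁ : S₁ ⊆ Finset.Icc 1 K) (hS₂ : S₂ ⊆ Finset.Icc 1 K)
    (hmin₁ : ∀ T ⊆ Finset.Icc 1 K, ell γ lam η₁ S₁ ≤ ell γ lam η₁ T)
    (hmin₂ : ∀ T ⊆ Finset.Icc 1 K, ell γ lam η₂ S₂ ≤ ell γ lam η₂ T)
    (hcard₁ : ∀ T ⊆ Finset.Icc 1 K,
      (∀ U ⊆ Finset.Icc 1 K, ell γ lam η₁ T ≤ ell γ lam η₁ U) → S₁.card ≤ T.card)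
    (hcard₂ : ∀ T ⊆ Finset.Icc 1 K,
      (∀ U ⊆ Finset.Icc 1 K, ell γ lam η₂ T ≤ ell γ lam η₂ U) → S₂.card ≤ T.card) :
    S₁ ⊆ S₂ := by
  rcases eq_or_lt_of_le hη₁ with h0 | hη₁pos
  · -- η₁ = 0: S₁ = ∅
    have hempty : ∀ U ⊆ Finset.Icc 1 K, ell γ lam η₁ (∅ : Finset ℕ) ≤ ell γ lam η₁ U := by
      intro U hU
      unfold ell
      simp [← h0]
      positivity
    have := hcard₁ ∅ (Finset.empty_subset _) hempty
    simp only [Finset.card_empty, Nat.le_zero, Finset.card_eq_zero] at this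
    rw [this]
    exact Finset.empty_subset _
  · -- η₁ > 0
    have hη₂pos : 0 < η₂ := lt_trans hη₁pos hη₁₂
    have hp₁ := min_is_prefix K γ lam η₁ hη₁pos hmono hstrict S₁ hS₁ hmin₁
    have hp₂ := min_is_prefix K γ lam η₂ hη₂pos hmono hstrict S₂ hS₂ hmin₂
    set m₁ := S₁.card
    set m₂ := S₂.card
    rcases le_or_gt m₁ m₂ with hle | hlt
    · rw [hp₁, hp₂]
      exact Finset.Icc_subset_Icc le_rfl hle
    · exfalso
      have hm₁K : m₁ ≤ K := by simpa using Finset.card_le_card hS₁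
      -- S₂ prefix Icc 1 m₂ is not a minimizer at η₁, since m₂ < m₁
      have hnotmin : ¬ (∀ U ⊆ Finset.Icc 1 K, ell γ lam η₁ S₂ ≤ ell γ lam η₁ U) := by
        intro h
        exact absurd (hcard₁ S₂ hS₂ h) (not_le.mpr hlt)
      push_neg at hnotmin
      obtain ⟨U, hU, hUlt⟩ := hnotmin
      have hstrict1 : ell γ lam η₁ S₁ < ell γ lam η₁ S₂ :=
        lt_of_le_of_lt (hmin₁ U hU) hUlt
      have h2 : ell γ lam η₂ S₂ ≤ ell γ lam η₂ S₁ := hmin₂ S₁ hS₁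
      -- translate to Psi
      rw [hp₁, hp₂, ell_prefix, ell_prefix] at hstrict1 h2
      -- D = Gam m₁ - Gam m₂ > 0
      have hD : 0 < Gam γ m₁ - Gam γ m₂ := by
        have hIcc : Finset.Icc 1 m₁ = Finset.Ioc 0 m₁ := by
          ext x; simp [Nat.lt_iff_add_one_le]
        have hIcc2 : Finset.Icc 1 m₂ = Finset.Ioc 0 m₂ := by
          ext x; simp [Nat.lt_iff_add_one_le]
        have hsplit : ∑ i ∈ Finset.Ioc 0 m₂, γ i + ∑ i ∈ Finset.Ioc m₂ m₁, γ i
            = ∑ i ∈ Finset.Ioc 0 m₁, γ i :=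
          Finset.sum_Ioc_consecutive γ (Nat.zero_le m₂) (le_of_lt hlt)
        have hpos : 0 < ∑ i ∈ Finset.Ioc m₂ m₁, γ i := by
          apply Finset.sum_pos
          · intro i hi
            have := Finset.mem_Ioc.mp hi
            have h1i : 1 ≤ i := by omega
            exact lt_of_lt_of_le hposK (hmono i K h1i (le_trans this.2 hm₁K) le_rfl)
          · exact Finset.nonempty_Ioc.mpr hlt
        unfold Gam
        rw [hIcc, hIcc2]
        linarith
      unfold Psi gfun at *
      nlinarith [hstrict1, h2, hD, hη₁₂]
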